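/- Let n ≥ 1 be an integer and let v¹, v², …, vⁿ be n pairwise distinct labels; set X := {v¹,…,vⁿ}. Let R := {{v¹,…,v^j} : 1 ≤ j ≤ n} ∪ {{v^j} : 1 ≤ j ≤ n} be the hierarchy of the caterpillar tree Rₙ[v¹,…,vⁿ] and let R̃ := {{v^j,…,vⁿ} : 1 ≤ j ≤ n} ∪ {{v^j} : 1 ≤ j ≤ n} be the hierarchy of the reversed caterpillar Rₙ[vⁿ,…,v¹]. Then for every nonempty subset L ⊆ X, there exists a hierarchy F on L with R|L ⊆ F and R̃|L ⊆ F (i.e., there exists a tree on L compatible with both caterpillars) if and only if |L| ≤ 2. -/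

import Mathlib

/-- `F` is a hierarchy on `L`: a family of nonempty subsets of `L` containing `L`
itself and all singletons, and laminar (any two members are disjoint or nested). -/
def IsHierarchy {α : Type*} (L : Set α) (F : Set (Set α)) : Prop :=
  (∀ A ∈ F, A ⊆ L ∧ A.Nonempty) ∧ L ∈ F ∧ (∀ x ∈ L, {x} ∈ F) ∧
    ∀ A ∈ F, ∀ B ∈ F, A ∩ B = ∅ ∨ A ⊆ B ∨ B ⊆ A

/-- The restriction `H|L := {A ∩ L : A ∈ H, A ∩ L ≠ ∅}` of a family of sets `H`
to a set `L`. -/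
def restrictH {α : Type*} (H : Set (Set α)) (L : Set α) : Set (Set α) :=
  {S | ∃ A ∈ H, S = A ∩ L ∧ S.Nonempty}

/-- Helper: if three `v`-images of ordered indices lie in `L`, no hierarchy on `L`
can contain both restricted caterpillar hierarchies. -/
lemma caterpillar_middle {α : Type*} {n : ℕ} {v : Fin n → α} (hv : Function.Injective v)
    {L : Set α} {F : Set (Set α)} (hF : IsHierarchy L F)
    (hR : restrictH ({S | ∃ j : Fin n, S = v '' {i | i ≤ j}} ∪
      {S | ∃ j : Fin n, S = {v j}}) L ⊆ F)
    (hRt : restrictH ({S | ∃ j : Fin n, S = v '' {i | j ≤ i}} ∪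
      {S | ∃ j : Fin n, S = {v j}}) L ⊆ F)
    {p q r : Fin n} (hpq : p < q) (hqr : q < r)
    (hp : v p ∈ L) (hq : v q ∈ L) (hr : v r ∈ L) : False := by
  set A : Set α := (v '' {i | i ≤ q}) ∩ L with hA
  set B : Set α := (v '' {i | q ≤ i}) ∩ L with hB
  have hqA : v q ∈ A := ⟨⟨q, le_refl q, rfl⟩, hq⟩
  have hqB : v q ∈ B := ⟨⟨q, le_refl q, rfl⟩, hq⟩
  have hpA : v p ∈ A := ⟨⟨p, le_of_lt hpq, rfl⟩, hp⟩
  have hrB : v r ∈ B := ⟨⟨r, le_of_lt hqr, rfl⟩, hr⟩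
  have hAF : A ∈ F := hR ⟨v '' {i | i ≤ q}, Or.inl ⟨q, rfl⟩, rfl, ⟨v q, hqA⟩⟩
  have hBF : B ∈ F := hRt ⟨v '' {i | q ≤ i}, Or.inl ⟨q, rfl⟩, rfl, ⟨v q, hqB⟩⟩
  rcases hF.2.2.2 A hAF B hBF with hdisj | hsub | hsub
  · exact absurd hdisj (Set.nonempty_iff_ne_empty.mp ⟨v q, hqA, hqB⟩)
  · obtain ⟨⟨i, hi, hiv⟩, -⟩ := hsub hpA
    exact absurd (hv hiv ▸ hi) (not_le_of_gt hpq)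
  · obtain ⟨⟨i, hi, hiv⟩, -⟩ := hsub hrB
    exact absurd (hv hiv ▸ hi) (not_le_of_gt hqr)

theorem caterpillar_compatibility {α : Type*} (n : ℕ) (hn : 1 ≤ n)
    (v : Fin n → α) (hv : Function.Injective v) :
    -- `X := {v¹, …, vⁿ}`
    let X : Set α := Set.range v
    -- the hierarchy of the caterpillar tree `Rₙ[v¹, …, vⁿ]`
    let R : Set (Set α) :=
      {S | ∃ j : Fin n, S = v '' {i | i ≤ j}} ∪ {S | ∃ j : Fin n, S = {v j}}
    -- the hierarchy of the reversed caterpillar tree `Rₙ[vⁿ, …, v¹]`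
    let Rt : Set (Set α) :=
      {S | ∃ j : Fin n, S = v '' {i | j ≤ i}} ∪ {S | ∃ j : Fin n, S = {v j}}
    ∀ L : Set α, L ⊆ X → L.Nonempty →
      ((∃ F : Set (Set α), IsHierarchy L F ∧ restrictH R L ⊆ F ∧ restrictH Rt L ⊆ F) ↔
        L.ncard ≤ 2) := by
  intro X R Rt L hL hLne
  have hLfin : L.Finite := (Set.finite_range v).subset hL
  constructor
  · rintro ⟨F, hF, hRF, hRtF⟩
    by_contra hcard
    have h3 : 2 < L.ncard := lt_of_not_ge hcard
    obtain ⟨x, hx, y, hy, z, hz, hxy, hxz, hyz⟩ := (Set.two_lt_ncard hLfin).mp h3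
    obtain ⟨a, rfl⟩ := hL hx
    obtain ⟨b, rfl⟩ := hL hy
    obtain ⟨c, rfl⟩ := hL hz
    have hab : a ≠ b := fun h => hxy (congrArg v h)
    have hac : a ≠ c := fun h => hxz (congrArg v h)
    have hbc : b ≠ c := fun h => hyz (congrArg v h)
    rcases lt_trichotomy a b with h1 | h1 | h1
    · rcases lt_trichotomy b c with h2 | h2 | h2
      · exact caterpillar_middle hv hF hRF hRtF h1 h2 hx hy hz
      · exact absurd h2 hbc
      · rcases lt_trichotomy a c with h3' | h3' | h3'
        · exact caterpillar_middle hv hF hRF hRtF h3' h2 hx hz hy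
        · exact absurd h3' hac
        · exact caterpillar_middle hv hF hRF hRtF h3' h1 hz hx hy
    · exact absurd h1 hab
    · rcases lt_trichotomy a c with h2 | h2 | h2
      · exact caterpillar_middle hv hF hRF hRtF h1 h2 hy hx hz
      · exact absurd h2 hac
      · rcases lt_trichotomy b c with h3' | h3' | h3'
        · exact caterpillar_middle hv hF hRF hRtF h3' h2 hy hz hx
        · exact absurd h3' hbc
        · exact caterpillar_middle hv hF hRF hRtF h3' h1 hz hy hx
  · intro hcard
    refine ⟨{A | A ⊆ L ∧ A.Nonempty}, ⟨fun A hA => hA, ⟨le_refl L, hLne⟩,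
      fun x hx => ⟨Set.singleton_subset_iff.mpr hx, ⟨x, rfl⟩⟩, ?_⟩, ?_, ?_⟩
    · rintro A ⟨hAL, -⟩ B ⟨hBL, -⟩
      by_cases hAB : A ⊆ B
      · exact Or.inr (Or.inl hAB)
      by_cases hBA : B ⊆ A
      · exact Or.inr (Or.inr hBA)
      obtain ⟨a, haA, haB⟩ := Set.not_subset.mp hAB
      obtain ⟨b, hbB, hbA⟩ := Set.not_subset.mp hBA
      have hne : a ≠ b := fun h => haB (h ▸ hbB)
      have hab : ({a, b} : Set α) ⊆ L := by
        rintro x (rfl | rfl)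
        exacts [hAL haA, hBL hbB]
      have hcard2 : ({a, b} : Set α).ncard = 2 := Set.ncard_pair hne
      have hLeq : ({a, b} : Set α) = L :=
        Set.eq_of_subset_of_ncard_le hab (hcard2 ▸ hcard) hLfin
      left
      ext x
      simp only [Set.mem_inter_iff, Set.mem_empty_iff_false, iff_false, not_and]
      intro hxA hxB
      have hxL : x ∈ ({a, b} : Set α) := hLeq ▸ hAL hxA
      rcases hxL with rfl | rfl
      · exact haB hxB
      · exact hbA hxA
    · rintro S ⟨A, -, rfl, hne⟩
      exact ⟨Set.inter_subset_right, hne⟩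
    · rintro S ⟨A, -, rfl, hne⟩
      exact ⟨Set.inter_subset_right, hne⟩
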